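/- Stationary distribution identity: for n ≥ 2, 1 ≤ ℓ ≤ n-1, with z_k := e^{(2πi/n)((n-ℓ+1)/2+k-1)} and distinct h₁,...,h_ℓ ∈ {0,...,n-1}, the determinant of the ℓ×ℓ Hermitian matrix K with K(j,k) = (1/n) Σ_{m=1}^ℓ z_m^{h_j - h_k} equals n^{-ℓ} · Δ(h)², where Δ(h) = ∏_{1 ≤ j < k ≤ ℓ} |e^{2πi h_k/n} - e^{2πi h_j/n}|. In particular, summed over all subsets {h₁,...,h_ℓ} ⊆ ℤ/nℤ of size ℓ, these values define a probability distribution. -/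

import Mathlib

/-- `z_k = e^{(2πi/n)((n-ℓ+1)/2 + k)}`, `k = 0,…,ℓ-1`. -/
noncomputable def rootL (n ℓ : ℕ) (k : Fin ℓ) : ℂ :=
  Complex.exp ((2 * Real.pi * Complex.I / n) * (((n : ℂ) - (ℓ : ℂ) + 1) / 2 + (k : ℂ)))

open Finset Matrix Equiv

noncomputable def wwC (n a : ℕ) : ℂ := Complex.exp (2 * Real.pi * Complex.I * a / n)

noncomputable def EE (n ℓ : ℕ) : ℂ :=
  Complex.exp ((2 * Real.pi * Complex.I / n) * (((n : ℂ) - (ℓ : ℂ) + 1) / 2))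

lemma rootL_pow (n ℓ : ℕ) (m : Fin ℓ) (a : ℕ) :
    rootL n ℓ m ^ a = EE n ℓ ^ a * wwC n a ^ (m : ℕ) := by
  rw [rootL, EE, wwC, ← Complex.exp_nat_mul, ← Complex.exp_nat_mul, ← Complex.exp_nat_mul,
    ← Complex.exp_add]
  congr 1
  ring

lemma rootL_eq_real (n ℓ : ℕ) (m : Fin ℓ) :
    rootL n ℓ m
      = Complex.exp (((2 * Real.pi / n * (((n : ℝ) - (ℓ : ℝ) + 1) / 2 + (m : ℕ)) : ℝ) : ℂ)
          * Complex.I) := by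
  rw [rootL]
  congr 1
  push_cast
  ring

lemma EE_eq_real (n ℓ : ℕ) :
    EE n ℓ = Complex.exp (((2 * Real.pi / n * (((n : ℝ) - (ℓ : ℝ) + 1) / 2) : ℝ) : ℂ)
          * Complex.I) := by
  rw [EE]
  congr 1
  push_cast
  ring

lemma conj_rootL (n ℓ : ℕ) (m : Fin ℓ) :
    (starRingEnd ℂ) (rootL n ℓ m) = (rootL n ℓ m)⁻¹ := by
  rw [rootL_eq_real, ← Complex.exp_conj, ← Complex.exp_neg]
  congr 1
  simp only [_root_.map_mul, Complex.conj_ofReal, Complex.conj_I]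
  ring

lemma ortho (n ℓ : ℕ) (hn : 2 ≤ n) (hℓn : ℓ ≤ n - 1) (j m : Fin ℓ) :
    ∑ a : Fin n, rootL n ℓ j ^ (a : ℕ) * (starRingEnd ℂ) (rootL n ℓ m ^ (a : ℕ))
      = if j = m then (n : ℂ) else 0 := by
  have hn0 : (n : ℂ) ≠ 0 := by
    exact_mod_cast Nat.cast_ne_zero.mpr (by omega)
  have hsummand : ∀ a : Fin n,
      rootL n ℓ j ^ (a : ℕ) * (starRingEnd ℂ) (rootL n ℓ m ^ (a : ℕ))
        = (rootL n ℓ j * (rootL n ℓ m)⁻¹) ^ (a : ℕ) := by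
    intro a
    rw [map_pow, conj_rootL, mul_pow]
  simp_rw [hsummand]
  have hx : rootL n ℓ j * (rootL n ℓ m)⁻¹
      = Complex.exp ((2 * Real.pi * Complex.I) * (((j : ℕ) : ℂ) - ((m : ℕ) : ℂ)) / n) := by
    rw [rootL, rootL, ← Complex.exp_neg, ← Complex.exp_add]
    congr 1
    ring
  by_cases hjm : j = m
  · subst hjm
    simp only [sub_self, mul_zero, zero_div, Complex.exp_zero] at hx
    simp [hx]
  · rw [if_neg hjm, hx]
    set x : ℂ := Complex.exp ((2 * Real.pi * Complex.I) * (((j : ℕ) : ℂ) - ((m : ℕ) : ℂ)) / n)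
      with hxdef
    have hd0 : ((j : ℕ) : ℤ) - ((m : ℕ) : ℤ) ≠ 0 := by
      have : (j : ℕ) ≠ (m : ℕ) := fun hh => hjm (Fin.ext hh)
      omega
    have hx1 : x ≠ 1 := by
      rw [Ne, Complex.exp_eq_one_iff]
      rintro ⟨k, hk⟩
      have h2pi : (2 * (Real.pi : ℂ) * Complex.I) ≠ 0 := by
        simp [Real.pi_ne_zero, Complex.I_ne_zero]
      have hk' : (((j : ℕ) : ℂ) - ((m : ℕ) : ℂ)) = (k : ℂ) * n := by
        field_simp at hk
        refine mul_left_cancel₀ h2pi ?_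
        linear_combination (2 * (Real.pi : ℂ) * Complex.I) * hk
      have hkZ : ((j : ℕ) : ℤ) - ((m : ℕ) : ℤ) = k * n := by exact_mod_cast hk'
      have hjn : (j : ℕ) < n := by have := j.isLt; omega
      have hmn : (m : ℕ) < n := by have := m.isLt; omega
      rcases eq_or_ne k 0 with rfl | hk0
      · simp at hkZ; omega
      · have h1 : 1 ≤ k.natAbs := by omega
        have : (((j : ℕ) : ℤ) - ((m : ℕ) : ℤ)).natAbs = k.natAbs * n := by
          rw [hkZ, Int.natAbs_mul, Int.natAbs_natCast]
        have hlt : (((j : ℕ) : ℤ) - ((m : ℕ) : ℤ)).natAbs < n := by omega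
        have : n ≤ k.natAbs * n := Nat.le_mul_of_pos_left n (by omega)
        omega
    have hxn : x ^ n = 1 := by
      rw [show x = Complex.exp ((2 * Real.pi * Complex.I) * (((j : ℕ) : ℂ) - ((m : ℕ) : ℂ)) / n) from rfl, ← Complex.exp_nat_mul]
      have : (n : ℂ) * ((2 * Real.pi * Complex.I) * (((j : ℕ) : ℂ) - ((m : ℕ) : ℂ)) / n)
          = ((((j : ℕ) : ℤ) - ((m : ℕ) : ℤ) : ℤ) : ℂ) * (2 * Real.pi * Complex.I) := by
        push_cast
        field_simp
      rw [this, Complex.exp_int_mul_two_pi_mul_I]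
    rw [Fin.sum_univ_eq_sum_range (fun i => x ^ i), geom_sum_eq hx1, hxn]
    simp

lemma detV (n ℓ : ℕ) (g : Fin ℓ → ℕ) :
    Matrix.det (Matrix.of fun j m : Fin ℓ => rootL n ℓ m ^ g j)
      = (∏ j, EE n ℓ ^ g j) *
          ∏ i : Fin ℓ, ∏ j ∈ Finset.Ioi i, (wwC n (g j) - wwC n (g i)) := by
  have hM : (Matrix.of fun j m : Fin ℓ => rootL n ℓ m ^ g j)
      = Matrix.of (fun j m : Fin ℓ =>
          (EE n ℓ ^ g j) * (Matrix.vandermonde (fun j => wwC n (g j))) j m) := by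
    ext j m
    rw [Matrix.of_apply, Matrix.of_apply, rootL_pow, Matrix.vandermonde_apply]
  rw [hM, Matrix.det_mul_column, Matrix.det_vandermonde]

lemma abs_EE (n ℓ : ℕ) : ‖EE n ℓ‖ = 1 := by
  rw [EE_eq_real]
  exact Complex.norm_exp_ofReal_mul_I _

lemma abs_detV (n ℓ : ℕ) (g : Fin ℓ → ℕ) :
    ‖Matrix.det (Matrix.of fun j m : Fin ℓ => rootL n ℓ m ^ g j)‖
      = ∏ i : Fin ℓ, ∏ j ∈ Finset.Ioi i, ‖wwC n (g j) - wwC n (g i)‖ := by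
  rw [detV, norm_mul]
  have h1 : ‖∏ j, EE n ℓ ^ g j‖ = 1 := by
    rw [norm_prod]
    simp [norm_pow, abs_EE]
  rw [h1, one_mul, norm_prod]
  exact Finset.prod_congr rfl fun i _ => norm_prod _ _

lemma prod_lt_pairs {M : Type*} [CommMonoid M] {ℓ : ℕ} (F : Fin ℓ → Fin ℓ → M) :
    ∏ p ∈ Finset.univ.filter (fun p : Fin ℓ × Fin ℓ => p.1 < p.2), F p.1 p.2
      = ∏ i, ∏ j ∈ Finset.Ioi i, F i j := by
  rw [Finset.prod_sigma']
  refine Finset.prod_nbij' (fun p => ⟨p.1, p.2⟩) (fun p => (p.1, p.2)) ?_ ?_ ?_ ?_ ?_ <;>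
    simp [Finset.mem_sigma, Finset.mem_filter, Finset.mem_Ioi]

lemma part1 (n ℓ : ℕ) (hn : 2 ≤ n) (hℓ1 : 1 ≤ ℓ)
    (hℓn : ℓ ≤ n - 1) (h : Fin ℓ → ℕ) (hinj : Function.Injective h)
    (hlt : ∀ j, h j < n) :
    Matrix.det (Matrix.of fun j k : Fin ℓ =>
        (1 / (n : ℂ)) * ∑ m : Fin ℓ, rootL n ℓ m ^ ((h j : ℤ) - (h k : ℤ)))
      = (((n : ℝ) ^ (-(ℓ : ℤ)) *
          (∏ p ∈ Finset.univ.filter (fun p : Fin ℓ × Fin ℓ => p.1 < p.2),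
            ‖Complex.exp (2 * Real.pi * Complex.I * (h p.2) / n)
              - Complex.exp (2 * Real.pi * Complex.I * (h p.1) / n)‖) ^ 2 : ℝ) : ℂ) := by
  classical
  set A : Matrix (Fin ℓ) (Fin ℓ) ℂ := Matrix.of fun j m : Fin ℓ => rootL n ℓ m ^ h j with hA
  have hKA : (Matrix.of fun j k : Fin ℓ =>
      (1 / (n : ℂ)) * ∑ m : Fin ℓ, rootL n ℓ m ^ ((h j : ℤ) - (h k : ℤ)))
      = (1 / (n : ℂ)) • (A * Aᴴ) := by
    ext j k
    rw [Matrix.of_apply, Matrix.smul_apply, Matrix.mul_apply, smul_eq_mul]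
    congr 1
    refine Finset.sum_congr rfl fun m _ => ?_
    have hz : rootL n ℓ m ≠ 0 := Complex.exp_ne_zero _
    rw [zpow_sub₀ hz, div_eq_mul_inv, zpow_natCast, zpow_natCast]
    rw [Matrix.conjTranspose_apply, hA, Matrix.of_apply]
    congr 1
    rw [← inv_pow, ← conj_rootL, ← map_pow]
    rfl
  rw [hKA, Matrix.det_smul, Matrix.det_mul, Matrix.det_conjTranspose]
  have habs : ‖Matrix.det A‖
      = ∏ p ∈ Finset.univ.filter (fun p : Fin ℓ × Fin ℓ => p.1 < p.2),
          ‖Complex.exp (2 * Real.pi * Complex.I * (h p.2) / n)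
            - Complex.exp (2 * Real.pi * Complex.I * (h p.1) / n)‖ := by
    rw [hA, abs_detV]
    exact (prod_lt_pairs fun i j => ‖wwC n (h j) - wwC n (h i)‖).symm
  have hmc : Matrix.det A * star (Matrix.det A)
      = ((‖Matrix.det A‖ ^ 2 : ℝ) : ℂ) := by
    rw [Complex.sq_norm, ← Complex.mul_conj]
    rfl
  rw [hmc, habs, Fintype.card_fin, Complex.ofReal_mul, Complex.ofReal_zpow]
  rw [one_div, inv_pow, ← zpow_natCast (n : ℂ), ← _root_.zpow_neg]
  congr 2

lemma sq_prod_lt {ℓ : ℕ} (F : Fin ℓ → Fin ℓ → ℝ) (hsym : ∀ i j, F i j = F j i) :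
    (∏ i, ∏ j ∈ Finset.Ioi i, F i j) ^ 2
      = ∏ p ∈ Finset.univ.filter (fun p : Fin ℓ × Fin ℓ => p.1 ≠ p.2), F p.1 p.2 := by
  classical
  have hsplit : Finset.univ.filter (fun p : Fin ℓ × Fin ℓ => p.1 ≠ p.2)
      = Finset.univ.filter (fun p : Fin ℓ × Fin ℓ => p.1 < p.2)
          ∪ Finset.univ.filter (fun p : Fin ℓ × Fin ℓ => p.2 < p.1) := by
    ext p
    simp only [Finset.mem_filter, Finset.mem_union, Finset.mem_univ, true_and]
    constructor
    · intro hne; rcases lt_or_gt_of_ne hne with hlt | hgt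
      · exact Or.inl hlt
      · exact Or.inr hgt
    · rintro (hlt | hgt)
      · exact ne_of_lt hlt
      · exact (ne_of_lt hgt).symm
  have hdisj : Disjoint (Finset.univ.filter (fun p : Fin ℓ × Fin ℓ => p.1 < p.2))
      (Finset.univ.filter (fun p : Fin ℓ × Fin ℓ => p.2 < p.1)) := by
    rw [Finset.disjoint_left]
    intro p hp hp'
    simp only [Finset.mem_filter] at hp hp'
    exact absurd hp'.2 (not_lt_of_gt hp.2)
  have hswap : ∏ p ∈ Finset.univ.filter (fun p : Fin ℓ × Fin ℓ => p.2 < p.1), F p.1 p.2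
      = ∏ p ∈ Finset.univ.filter (fun p : Fin ℓ × Fin ℓ => p.1 < p.2), F p.1 p.2 := by
    refine Finset.prod_nbij' (fun p => (p.2, p.1)) (fun p => (p.2, p.1)) ?_ ?_ ?_ ?_ ?_ <;>
      simp only [Finset.mem_filter, Finset.mem_univ, true_and, Prod.forall]
    · intro a b hab; exact hab
    · intro a b hab; exact hab
    · intro a b _; trivial
    · intro a b _; trivial
    · intro a b _; exact hsym a b
  rw [hsplit, Finset.prod_union hdisj, sq, ← prod_lt_pairs F, hswap]

lemma detV_zero (n ℓ : ℕ) (f : Fin ℓ → Fin n) (hf : ¬ Function.Injective f) :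
    Matrix.det (Matrix.of fun j m : Fin ℓ => rootL n ℓ m ^ ((f j : ℕ))) = 0 := by
  rw [Function.not_injective_iff] at hf
  obtain ⟨j, k, hjk, hne⟩ := hf
  refine Matrix.det_zero_of_row_eq hne ?_
  funext m
  simp [hjk]

lemma image_offDiag_prod (n ℓ : ℕ) (f : Fin ℓ → Fin n) (hf : Function.Injective f)
    (D : ℕ → ℕ → ℝ) :
    ∏ p ∈ Finset.univ.filter (fun p : Fin ℓ × Fin ℓ => p.1 ≠ p.2), D ((f p.1 : ℕ)) ((f p.2 : ℕ))
      = ∏ p ∈ (Finset.image (fun j => (f j : ℕ)) Finset.univ).offDiag, D p.1 p.2 := by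
  classical
  have hg : Function.Injective (fun j : Fin ℓ => ((f j : ℕ))) :=
    fun a b hab => hf (Fin.ext hab)
  refine Finset.prod_bij (fun p _ => (((f p.1 : ℕ)), ((f p.2 : ℕ)))) ?_ ?_ ?_ ?_
  · intro p hp
    simp only [Finset.mem_filter, Finset.mem_univ, true_and] at hp
    simp only [Finset.mem_offDiag, Finset.mem_image]
    exact ⟨⟨p.1, Finset.mem_univ _, rfl⟩, ⟨p.2, Finset.mem_univ _, rfl⟩,
      fun hc => hp (hg hc)⟩
  · intro p hp q hq hpq
    simp only [Prod.mk.injEq] at hpq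
    exact Prod.ext (hg hpq.1) (hg hpq.2)
  · intro q hq
    simp only [Finset.mem_offDiag, Finset.mem_image] at hq
    obtain ⟨⟨a, _, ha⟩, ⟨b, _, hb⟩, hne⟩ := hq
    refine ⟨(a, b), ?_, ?_⟩
    · simp only [Finset.mem_filter, Finset.mem_univ, true_and]
      intro hc
      exact hne (by rw [← ha, ← hb, hc])
    · simp [ha, hb]
  · intro p _
    rfl

open scoped Classical in
lemma fiber_card (n ℓ : ℕ) (S : Finset ℕ) (hsub : S ⊆ Finset.range n) (hcard : S.card = ℓ) :
    ((Finset.univ : Finset (Fin ℓ → Fin n)).filter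
        (fun f : Fin ℓ → Fin n =>
          Function.Injective f ∧ Finset.image (fun j => (f j : ℕ)) Finset.univ = S)).card
      = Nat.factorial ℓ := by
  classical
  set e := S.orderIsoOfFin hcard with he
  have hmem : ∀ i : Fin ℓ, ((e i : ℕ)) < n := by
    intro i
    exact Finset.mem_range.mp (hsub (e i).2)
  set emb : Fin ℓ → Fin n := fun i => ⟨(e i : ℕ), hmem i⟩ with hemb
  have hembinj : Function.Injective emb := by
    intro a b hab
    have : ((e a : ℕ)) = ((e b : ℕ)) := congrArg Fin.val hab
    exact e.injective (Subtype.ext this)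
  have := Finset.card_bij (fun (σ : Equiv.Perm (Fin ℓ)) (_ : σ ∈ Finset.univ) => (emb ∘ σ : Fin ℓ → Fin n))
    (s := (Finset.univ : Finset (Equiv.Perm (Fin ℓ))))
    (t := (Finset.univ : Finset (Fin ℓ → Fin n)).filter
        (fun f : Fin ℓ → Fin n =>
          Function.Injective f ∧ Finset.image (fun j => (f j : ℕ)) Finset.univ = S))
    ?_ ?_ ?_
  · rw [← this, Finset.card_univ, Fintype.card_perm, Fintype.card_fin]
  · intro σ _
    simp only [Finset.mem_filter, Finset.mem_univ, true_and]
    constructor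
    · exact hembinj.comp σ.injective
    · ext a
      simp only [Finset.mem_image, Finset.mem_univ, true_and, Function.comp_apply]
      constructor
      · rintro ⟨j, rfl⟩
        exact (e (σ j)).2
      · intro ha
        exact ⟨σ.symm (e.symm ⟨a, ha⟩), by simp [hemb]⟩
  · intro σ₁ _ σ₂ _ hs
    ext j
    exact congrArg Fin.val (hembinj (congrFun hs j))
  · intro f hf
    simp only [Finset.mem_filter, Finset.mem_univ, true_and] at hf
    obtain ⟨hfinj, hfim⟩ := hf
    have hmemS : ∀ j, ((f j : ℕ)) ∈ S := by
      intro j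
      rw [← hfim]
      exact Finset.mem_image.mpr ⟨j, Finset.mem_univ _, rfl⟩
    set u : Fin ℓ → Fin ℓ := fun j => e.symm ⟨(f j : ℕ), hmemS j⟩ with hu
    have huinj : Function.Injective u := by
      intro a b hab
      have := congrArg (fun x => ((e x : ℕ))) hab
      simp only [hu, OrderIso.apply_symm_apply] at this
      exact hfinj (Fin.ext this)
    obtain ⟨σ, hσ⟩ : ∃ σ : Equiv.Perm (Fin ℓ), ∀ j, σ j = u j :=
      ⟨Equiv.ofBijective u (Finite.injective_iff_bijective.mp huinj), fun j => rfl⟩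
    refine ⟨σ, Finset.mem_univ _, ?_⟩
    funext j
    simp only [Function.comp_apply, hσ j, hemb, hu]
    apply Fin.ext
    simp

lemma perm_sum_det {L : ℕ} (G : Fin L → Fin L → ℂ) (σ : Perm (Fin L)) :
    ∑ τ : Perm (Fin L), (((Perm.sign σ : ℤ) : ℂ) * ((Perm.sign τ : ℤ) : ℂ)) * ∏ j, G (σ.symm j) (τ.symm j)
      = Matrix.det (Matrix.of fun j m => G j m) := by
  have step1 : ∀ π : Perm (Fin L),
      (((Perm.sign σ : ℤ) : ℂ) * ((Perm.sign (σ * π) : ℤ) : ℂ)) * ∏ j, G (σ.symm j) ((σ * π).symm j)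
        = ((Perm.sign π : ℤ) : ℂ) * ∏ i, G i (π.symm i) := by
    intro π
    have hs : (((Perm.sign σ : ℤ) : ℂ) * ((Perm.sign (σ * π) : ℤ) : ℂ)) = ((Perm.sign π : ℤ) : ℂ) := by
      rw [Perm.sign_mul]
      rcases Int.units_eq_one_or (Perm.sign σ) with h | h <;> simp [h]
    rw [hs]
    congr 1
    have := Equiv.prod_comp σ (fun j => G (σ.symm j) ((σ * π).symm j))
    rw [← this]
    apply Finset.prod_congr rfl
    intro i _
    congr 1
    · simp
    · rw [Equiv.symm_apply_eq]; simp [Perm.mul_apply]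
  calc ∑ τ : Perm (Fin L), (((Perm.sign σ : ℤ) : ℂ) * ((Perm.sign τ : ℤ) : ℂ)) * ∏ j, G (σ.symm j) (τ.symm j)
      = ∑ π : Perm (Fin L), ((Perm.sign π : ℤ) : ℂ) * ∏ i, G i (π.symm i) := by
        refine (Fintype.sum_equiv (Equiv.mulLeft σ) _ _ ?_).symm
        intro π
        simpa using (step1 π).symm
    _ = ∑ π : Perm (Fin L), ((Perm.sign π : ℤ) : ℂ) * ∏ i, G i (π i) := by
        refine Fintype.sum_equiv (Equiv.inv (Perm (Fin L))) _ _ ?_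
        intro π
        simp [Perm.sign_inv]
    _ = Matrix.det (Matrix.of fun j m => G j m) := by
        rw [← Matrix.det_transpose, Matrix.det_apply']
        rfl

lemma andreief {N L : ℕ} (A B : Fin N → Fin L → ℂ) :
    ∑ f : Fin L → Fin N,
        (Matrix.det (Matrix.of fun j m => A (f j) m)) *
          (Matrix.det (Matrix.of fun j m => B (f j) m))
      = (L.factorial : ℂ) * Matrix.det (Matrix.of fun j m => ∑ a, A a j * B a m) := by
  have key : ∀ σ τ : Perm (Fin L),
      ∑ f : Fin L → Fin N,
          (∏ m, A (f (σ m)) m) * (∏ m, B (f (τ m)) m)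
        = ∏ j, ∑ a, A a (σ.symm j) * B a (τ.symm j) := by
    intro σ τ
    have h1 : ∀ f : Fin L → Fin N,
        (∏ m, A (f (σ m)) m) * (∏ m, B (f (τ m)) m)
          = ∏ j, (A (f j) (σ.symm j) * B (f j) (τ.symm j)) := by
      intro f
      rw [Finset.prod_mul_distrib]
      congr 1
      · have := Equiv.prod_comp σ (fun j => A (f j) (σ.symm j))
        simp only [Equiv.symm_apply_apply] at this
        exact this
      · have := Equiv.prod_comp τ (fun j => B (f j) (τ.symm j))
        simp only [Equiv.symm_apply_apply] at this
        exact this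
    simp_rw [h1]
    exact (Fintype.prod_sum (fun j a => A a (σ.symm j) * B a (τ.symm j))).symm
  calc
    ∑ f : Fin L → Fin N,
        (Matrix.det (Matrix.of fun j m => A (f j) m)) *
          (Matrix.det (Matrix.of fun j m => B (f j) m))
      = ∑ f : Fin L → Fin N, ∑ σ : Perm (Fin L), ∑ τ : Perm (Fin L),
          (((Perm.sign σ : ℤ) : ℂ) * ((Perm.sign τ : ℤ) : ℂ)) *
            ((∏ m, A (f (σ m)) m) * (∏ m, B (f (τ m)) m)) := by
        simp_rw [Matrix.det_apply', Matrix.of_apply, Fintype.sum_mul_sum, mul_mul_mul_comm]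
    _ = ∑ σ : Perm (Fin L), ∑ τ : Perm (Fin L),
          (((Perm.sign σ : ℤ) : ℂ) * ((Perm.sign τ : ℤ) : ℂ)) *
            ∑ f : Fin L → Fin N, (∏ m, A (f (σ m)) m) * (∏ m, B (f (τ m)) m) := by
        rw [Finset.sum_comm]
        refine Finset.sum_congr rfl fun σ _ => ?_
        rw [Finset.sum_comm]
        simp_rw [Finset.mul_sum]
    _ = ∑ σ : Perm (Fin L), ∑ τ : Perm (Fin L),
          (((Perm.sign σ : ℤ) : ℂ) * ((Perm.sign τ : ℤ) : ℂ)) *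
            ∏ j, ∑ a, A a (σ.symm j) * B a (τ.symm j) := by
        simp_rw [key]
    _ = ∑ _σ : Perm (Fin L), Matrix.det (Matrix.of fun j m => ∑ a, A a j * B a m) := by
        refine Finset.sum_congr rfl fun σ _ => ?_
        exact perm_sum_det (fun j m => ∑ a, A a j * B a m) σ
    _ = (L.factorial : ℂ) * Matrix.det (Matrix.of fun j m => ∑ a, A a j * B a m) := by
        rw [Finset.sum_const, Finset.card_univ, Fintype.card_perm, Fintype.card_fin, nsmul_eq_mul]

open scoped Classical in
lemma part2 (n ℓ : ℕ) (hn : 2 ≤ n) (hℓ1 : 1 ≤ ℓ) (hℓn : ℓ ≤ n - 1) :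
    ∑ S ∈ (Finset.range n).powersetCard ℓ,
        ((n : ℝ) ^ (-(ℓ : ℤ))) *
          ∏ p ∈ S.offDiag,
            ‖Complex.exp (2 * Real.pi * Complex.I * (p.2 : ℕ) / n)
              - Complex.exp (2 * Real.pi * Complex.I * (p.1 : ℕ) / n)‖ = 1 := by
  set P : Finset ℕ → ℝ := fun S => ∏ p ∈ S.offDiag,
    ‖wwC n p.2 - wwC n p.1‖ with hP
  set F : (Fin ℓ → Fin n) → ℝ :=
    fun f => ‖Matrix.det (Matrix.of fun j m : Fin ℓ => rootL n ℓ m ^ ((f j : ℕ)))‖ ^ 2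
    with hF
  -- Step 1: total sum of F over all functions
  have step1 : ∑ f : Fin ℓ → Fin n, F f = (Nat.factorial ℓ : ℝ) * (n : ℝ) ^ ℓ := by
    have hA := andreief (fun (a : Fin n) (m : Fin ℓ) => rootL n ℓ m ^ (a : ℕ))
      (fun (a : Fin n) (m : Fin ℓ) => (starRingEnd ℂ) (rootL n ℓ m ^ (a : ℕ)))
    have hG : (Matrix.of fun j m : Fin ℓ =>
        ∑ a : Fin n, rootL n ℓ j ^ (a : ℕ) * (starRingEnd ℂ) (rootL n ℓ m ^ (a : ℕ)))
        = Matrix.diagonal (fun _ : Fin ℓ => (n : ℂ)) := by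
      ext j m
      rw [Matrix.of_apply, ortho n ℓ hn hℓn j m, Matrix.diagonal_apply]
    rw [hG, Matrix.det_diagonal, Finset.prod_const, Finset.card_univ, Fintype.card_fin] at hA
    have hterm : ∀ f : Fin ℓ → Fin n,
        (Matrix.det (Matrix.of fun j m : Fin ℓ => rootL n ℓ m ^ ((f j : ℕ)))) *
          (Matrix.det (Matrix.of fun j m : Fin ℓ => (starRingEnd ℂ) (rootL n ℓ m ^ ((f j : ℕ)))))
          = ((F f : ℝ) : ℂ) := by
      intro f
      have hconj : (Matrix.det (Matrix.of fun j m : Fin ℓ =>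
          (starRingEnd ℂ) (rootL n ℓ m ^ ((f j : ℕ)))))
          = (starRingEnd ℂ) (Matrix.det (Matrix.of fun j m : Fin ℓ => rootL n ℓ m ^ ((f j : ℕ)))) := by
        rw [RingHom.map_det]
        rfl
      rw [hconj, hF]
      rw [Complex.mul_conj, ← Complex.sq_norm]
    have hsum : ((∑ f : Fin ℓ → Fin n, F f : ℝ) : ℂ)
        = ∑ f : Fin ℓ → Fin n,
            (Matrix.det (Matrix.of fun j m : Fin ℓ => rootL n ℓ m ^ ((f j : ℕ)))) *
              (Matrix.det (Matrix.of fun j m : Fin ℓ =>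
                (starRingEnd ℂ) (rootL n ℓ m ^ ((f j : ℕ))))) := by
      rw [Complex.ofReal_sum]
      exact Finset.sum_congr rfl fun f _ => (hterm f).symm
    have hfinal : ((∑ f : Fin ℓ → Fin n, F f : ℝ) : ℂ)
        = (((Nat.factorial ℓ : ℝ) * (n : ℝ) ^ ℓ : ℝ) : ℂ) := by
      rw [hsum, hA]
      push_cast
      ring
    exact_mod_cast hfinal
  -- Step 2: F of an injective function
  have step2 : ∀ f : Fin ℓ → Fin n, Function.Injective f →
      F f = P (Finset.image (fun j => (f j : ℕ)) Finset.univ) := by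
    intro f hf
    simp only [hF]
    have habs := abs_detV n ℓ (fun j => (f j : ℕ))
    rw [habs]
    rw [sq_prod_lt (fun i j => ‖wwC n ((f j : ℕ)) - wwC n ((f i : ℕ))‖)
      (fun i j => norm_sub_rev _ _)]
    exact image_offDiag_prod n ℓ f hf (fun a b => ‖wwC n b - wwC n a‖)
  -- Step 3: group by image
  have step3 : ∑ f : Fin ℓ → Fin n, F f
      = ∑ S ∈ (Finset.range n).powersetCard ℓ, (Nat.factorial ℓ : ℝ) * P S := by
    have hzero : ∑ f : Fin ℓ → Fin n, F f
        = ∑ f ∈ Finset.univ.filter (fun f : Fin ℓ → Fin n => Function.Injective f), F f := by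
      refine (Finset.sum_subset (Finset.filter_subset _ _) ?_).symm
      intro f _ hf
      simp only [Finset.mem_filter, Finset.mem_univ, true_and] at hf
      rw [hF]
      simp [detV_zero n ℓ f hf]
    rw [hzero]
    have hmaps : ∀ f ∈ Finset.univ.filter (fun f : Fin ℓ → Fin n => Function.Injective f),
        Finset.image (fun j => (f j : ℕ)) Finset.univ ∈ (Finset.range n).powersetCard ℓ := by
      intro f hf
      simp only [Finset.mem_filter, Finset.mem_univ, true_and] at hf
      rw [Finset.mem_powersetCard]
      constructor
      · intro a ha
        simp only [Finset.mem_image, Finset.mem_univ, true_and] at ha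
        obtain ⟨j, rfl⟩ := ha
        exact Finset.mem_range.mpr (f j).isLt
      · rw [Finset.card_image_of_injective _ (fun a b hab => hf (Fin.ext hab)),
          Finset.card_univ, Fintype.card_fin]
    rw [← Finset.sum_fiberwise_of_maps_to hmaps F]
    refine Finset.sum_congr rfl fun S hS => ?_
    obtain ⟨hsub, hcard⟩ := Finset.mem_powersetCard.mp hS
    have hfib : ∀ f ∈ (Finset.univ.filter
          (fun f : Fin ℓ → Fin n => Function.Injective f)).filter
          (fun f => Finset.image (fun j => (f j : ℕ)) Finset.univ = S), F f = P S := by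
      intro f hf
      simp only [Finset.mem_filter, Finset.mem_univ, true_and] at hf
      rw [step2 f hf.1, hf.2]
    rw [Finset.sum_congr rfl hfib, Finset.sum_const, nsmul_eq_mul]
    congr 1
    rw [Finset.filter_filter]
    exact_mod_cast congrArg Nat.cast (fiber_card n ℓ S hsub hcard)
  -- Final computation
  have hfac : (Nat.factorial ℓ : ℝ) ≠ 0 := by
    exact_mod_cast Nat.factorial_ne_zero ℓ
  have hsumP : ∑ S ∈ (Finset.range n).powersetCard ℓ, P S = (n : ℝ) ^ ℓ := by
    apply mul_left_cancel₀ hfac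
    rw [Finset.mul_sum]
    rw [← step3, step1]
  have hn0 : (n : ℝ) ≠ 0 := by positivity
  calc ∑ S ∈ (Finset.range n).powersetCard ℓ,
        ((n : ℝ) ^ (-(ℓ : ℤ))) * P S
      = ((n : ℝ) ^ (-(ℓ : ℤ))) * ∑ S ∈ (Finset.range n).powersetCard ℓ, P S := by
        rw [Finset.mul_sum]
    _ = 1 := by
        rw [hsumP, _root_.zpow_neg, zpow_natCast]
        exact inv_mul_cancel₀ (by positivity)

/-- Stationary distribution identity: `det((1/n) Σ_m z_m^{h_j - h_k}) = n^{-ℓ} Δ(h)²`,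
and summed over all size-`ℓ` subsets of `ℤ/nℤ` these values form a probability
distribution. -/
theorem stationary_distribution_identity (n ℓ : ℕ) (hn : 2 ≤ n) (hℓ1 : 1 ≤ ℓ)
    (hℓn : ℓ ≤ n - 1) (h : Fin ℓ → ℕ) (hinj : Function.Injective h)
    (hlt : ∀ j, h j < n) :
    Matrix.det (Matrix.of fun j k : Fin ℓ =>
        (1 / (n : ℂ)) * ∑ m : Fin ℓ, rootL n ℓ m ^ ((h j : ℤ) - (h k : ℤ)))
      = (((n : ℝ) ^ (-(ℓ : ℤ)) *
          (∏ p ∈ Finset.univ.filter (fun p : Fin ℓ × Fin ℓ => p.1 < p.2),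
            ‖Complex.exp (2 * Real.pi * Complex.I * (h p.2) / n)
              - Complex.exp (2 * Real.pi * Complex.I * (h p.1) / n)‖) ^ 2 : ℝ) : ℂ) ∧
    ∑ S ∈ (Finset.range n).powersetCard ℓ,
        ((n : ℝ) ^ (-(ℓ : ℤ))) *
          ∏ p ∈ S.offDiag,
            ‖Complex.exp (2 * Real.pi * Complex.I * (p.2 : ℕ) / n)
              - Complex.exp (2 * Real.pi * Complex.I * (p.1 : ℕ) / n)‖ = 1 := by
  exact ⟨part1 n ℓ hn hℓ1 hℓn h hinj hlt, part2 n ℓ hn hℓ1 hℓn⟩
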